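/- Fix c ≥ 0. For every λ > 0, (1/λ)·(1 − √λ(coth(√λ) − tanh((1+c)√λ))) = (2/(1+c)) Σ_{n≥0} 1/(λ + (π(2n+1)/(2(1+c)))²) − 2 Σ_{n≥1} 1/(λ + π²n²). -/

import Mathlib

open Real

section AuxStmt7
open Complex intervalIntegral

lemma coefA (a : ℝ) (ha : 0 < a) (n : ℤ) :
    ∫ x in (-(1/2) : ℝ)..(1/2), Complex.exp (-(2*π*I*n*x)) * Complex.cosh (a*x)
      = (-1)^n * (Complex.sinh ((a:ℂ)/2) * (2*(a:ℂ)/((a:ℂ)^2+4*(π:ℂ)^2*(n:ℂ)^2))) := by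
  have hc1 : ((a : ℂ) - 2*π*I*n) ≠ 0 := by
    intro h
    have := congrArg Complex.re h
    simp at this
    linarith
  have hc2 : (-((a : ℂ) + 2*π*I*n)) ≠ 0 := by
    intro h
    have := congrArg Complex.re h
    simp at this
    linarith
  have hint : ∀ x : ℝ, Complex.exp (-(2*π*I*n*x)) * Complex.cosh (a*x)
      = (Complex.exp (((a:ℂ) - 2*π*I*n) * x) + Complex.exp ((-((a:ℂ) + 2*π*I*n)) * x)) / 2 := by
    intro x
    rw [Complex.cosh, ← mul_div_assoc]
    congr 1
    rw [mul_add, ← Complex.exp_add, ← Complex.exp_add]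
    ring_nf
  rw [intervalIntegral.integral_congr (fun x _ => hint x)]
  rw [intervalIntegral.integral_div]
  rw [intervalIntegral.integral_add
    (Continuous.intervalIntegrable (by fun_prop) _ _)
    (Continuous.intervalIntegrable (by fun_prop) _ _)]
  rw [integral_exp_mul_complex hc1, integral_exp_mul_complex hc2]
  have hdenR : (a^2+4*π^2*(n:ℝ)^2 : ℝ) ≠ 0 := by positivity
  have hden : (((a:ℝ)^2+4*π^2*(n:ℝ)^2 : ℝ) : ℂ) ≠ 0 := by exact_mod_cast hdenR
  have hE : Complex.exp (a/2) ≠ 0 := Complex.exp_ne_zero _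
  have ht : Complex.exp (π*I*n) = (-1)^n := by
    rw [show ((π:ℂ)*I*n) = n*(π*I) by ring, Complex.exp_int_mul, Complex.exp_pi_mul_I]
  have ht2 : Complex.exp (π*I*n) * Complex.exp (π*I*n) = 1 := by
    rw [← Complex.exp_add, show ((π:ℂ)*I*n) + π*I*n = n*(2*π*I) by ring,
      Complex.exp_int_mul_two_pi_mul_I]
  have htinv : ((-1:ℂ)^n)⁻¹ = (-1)^n := by
    rw [← ht]; exact inv_eq_of_mul_eq_one_right ht2
  have e1 : Complex.exp (((a:ℂ) - 2*π*I*n) * ((1/2 : ℝ) : ℂ)) = Complex.exp ((a:ℂ)/2) * (-1)^n := by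
    rw [show ((a:ℂ) - 2*π*I*n) * ((1/2 : ℝ) : ℂ) = ↑a/2 + -(π*I*n) by push_cast; ring,
      Complex.exp_add, Complex.exp_neg, ht, htinv]
  have e2 : Complex.exp (((a:ℂ) - 2*π*I*n) * ((-(1/2) : ℝ) : ℂ)) = Complex.exp (-(a:ℂ)/2) * (-1)^n := by
    rw [show ((a:ℂ) - 2*π*I*n) * ((-(1/2) : ℝ) : ℂ) = -↑a/2 + (π*I*n) by push_cast; ring,
      Complex.exp_add, ht]
  have e3 : Complex.exp ((-((a:ℂ) + 2*π*I*n)) * ((1/2 : ℝ) : ℂ)) = Complex.exp (-(a:ℂ)/2) * (-1)^n := by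
    rw [show (-((a:ℂ) + 2*π*I*n)) * ((1/2 : ℝ) : ℂ) = -↑a/2 + -(π*I*n) by push_cast; ring,
      Complex.exp_add, Complex.exp_neg, ht, htinv]
  have e4 : Complex.exp ((-((a:ℂ) + 2*π*I*n)) * ((-(1/2) : ℝ) : ℂ)) = Complex.exp ((a:ℂ)/2) * (-1)^n := by
    rw [show (-((a:ℂ) + 2*π*I*n)) * ((-(1/2) : ℝ) : ℂ) = ↑a/2 + (π*I*n) by push_cast; ring,
      Complex.exp_add, ht]
  rw [e1, e2, e3, e4, div_neg]
  have hs : Complex.sinh ((a:ℂ)/2) = (Complex.exp ((a:ℂ)/2) - Complex.exp (-(a:ℂ)/2))/2 := by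
    rw [Complex.sinh]
    ring_nf
  have hc2' : ((a:ℂ) + 2*π*I*n) ≠ 0 := fun h => hc2 (by rw [h]; ring)
  have hw2 : ((a:ℂ)^2 + 4*(π:ℂ)^2*((n:ℤ):ℂ)^2) = ((a:ℂ) - 2*π*I*n) * ((a:ℂ) + 2*π*I*n) := by
    ring_nf
    simp [Complex.I_sq]
  rw [hs, hw2]
  field_simp [hc1, hc2']
  ring


lemma hasSum_int (a : ℝ) (ha : 0 < a) :
    HasSum (fun n : ℤ => 2*a/(a^2+4*π^2*(n:ℝ)^2)) (Real.cosh (a/2) / Real.sinh (a/2)) := by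
  haveI : Fact (0 < (1:ℝ)) := ⟨one_pos⟩
  set f : ℝ → ℂ := fun t => Complex.cosh (a*t) with hf
  have hper : f (-(1/2)) = f (-(1/2)+1) := by
    simp only [hf]
    norm_num
  have hcont : ContinuousOn f (Set.Icc (-(1/2)) (-(1/2)+1)) := by fun_prop
  set G : C(AddCircle (1:ℝ), ℂ) :=
    ⟨AddCircle.liftIco 1 (-(1/2)) f, AddCircle.liftIco_continuous hper hcont⟩ with hG
  have hcoef : ∀ n : ℤ, fourierCoeff (⇑G) n
      = (-1)^n * (Complex.sinh ((a:ℂ)/2) * (2*(a:ℂ)/((a:ℂ)^2+4*(π:ℂ)^2*(n:ℂ)^2))) := by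
    intro n
    show fourierCoeff (AddCircle.liftIco 1 (-(1/2)) f) n = _
    rw [fourierCoeff_liftIco_eq]
    rw [fourierCoeffOn_eq_integral]
    simp only [fourier_coe_apply]
    norm_num
    simp only [hf]
    exact coefA a ha n
  have hsinh : 0 < Real.sinh (a/2) := Real.sinh_pos_iff.mpr (by positivity)
  have hcast : ∀ n : ℤ, Complex.sinh ((a:ℂ)/2) * (2*(a:ℂ)/((a:ℂ)^2+4*(π:ℂ)^2*(n:ℂ)^2))
      = ((Real.sinh (a/2) * (2*a/(a^2+4*π^2*(n:ℝ)^2)) : ℝ) : ℂ) := by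
    intro n
    push_cast
    ring
  have hsummable : Summable (fun n : ℤ => fourierCoeff (⇑G) n) := by
    rw [summable_congr hcoef]
    apply Summable.of_norm_bounded_eventually
      (g := fun n : ℤ => (Real.sinh (a/2) * (2*a) / (4*π^2)) * (1/(n:ℝ)^2))
      ((Real.summable_one_div_int_pow.mpr one_lt_two).mul_left _)
    rw [Filter.eventually_cofinite]
    apply Set.Finite.subset (Set.finite_singleton (0:ℤ))
    intro i hi
    simp only [Set.mem_setOf_eq, not_le] at hi
    by_contra hne
    simp only [Set.mem_singleton_iff] at hne
    have hi2 : (1:ℝ) ≤ (i:ℝ)^2 := by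
      have : (1:ℤ) ≤ i^2 := by
        rcases lt_or_gt_of_ne hne with h | h <;> nlinarith
      exact_mod_cast this
    apply absurd hi
    push_neg
    rw [hcast, norm_mul, norm_zpow]
    simp only [norm_neg, norm_one, one_zpow, one_mul, Complex.norm_real]
    rw [Real.norm_eq_abs, _root_.abs_of_nonneg (mul_nonneg hsinh.le (by positivity : (0:ℝ) ≤ 2 * a / (a ^ 2 + 4 * π ^ 2 * (i:ℝ) ^ 2)))]
    have hi0 : (i:ℝ) ≠ 0 := Int.cast_ne_zero.mpr hne
    calc Real.sinh (a/2) * (2*a/(a^2+4*π^2*(i:ℝ)^2))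
        ≤ Real.sinh (a/2) * (2*a/(4*π^2*(i:ℝ)^2)) := by
          gcongr
          nlinarith [sq_nonneg a]
      _ = Real.sinh (a/2) * (2*a) / (4*π^2) * (1/(i:ℝ)^2) := by
          field_simp
  have hpt := has_pointwise_sum_fourier_series_of_summable hsummable (((-(1/2):ℝ)) : AddCircle (1:ℝ))
  have hGx : G (((-(1/2):ℝ)) : AddCircle (1:ℝ)) = ((Real.cosh (a/2) : ℝ) : ℂ) := by
    show AddCircle.liftIco 1 (-(1/2)) f _ = _
    rw [AddCircle.liftIco_coe_apply (by norm_num)]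
    simp only [hf]
    rw [show ((a:ℂ) * ((-(1/2):ℝ):ℂ)) = -((a/2 : ℝ):ℂ) by push_cast; ring, Complex.cosh_neg,
      Complex.ofReal_cosh]
  have hfour : ∀ i : ℤ, fourier i ((((-(1/2):ℝ))) : AddCircle (1:ℝ)) = ((-1:ℂ)^i)⁻¹ := by
    intro i
    rw [fourier_coe_apply]
    rw [show (2*(π:ℂ)*I*i*((-(1/2):ℝ):ℂ)/((1:ℝ):ℂ)) = -(i*(π*I)) by push_cast; ring]
    rw [Complex.exp_neg, Complex.exp_int_mul, Complex.exp_pi_mul_I]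
  rw [hGx] at hpt
  have hpt2 : HasSum (fun i : ℤ =>
      ((Real.sinh (a/2) * (2*a/(a^2+4*π^2*(i:ℝ)^2)) : ℝ) : ℂ)) ((Real.cosh (a/2) : ℝ) : ℂ) := by
    refine hpt.congr_fun fun i => ?_
    rw [smul_eq_mul, hcoef i, hfour i, hcast i]
    have hz : ((-1:ℂ)^i) ≠ 0 := zpow_ne_zero _ (by norm_num)
    field_simp
  have hpt3 := Complex.hasSum_ofReal.mp hpt2
  have hpt4 := hpt3.div_const (Real.sinh (a/2))
  refine hpt4.congr_fun fun i => ?_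
  exact (mul_div_cancel_left₀ _ (ne_of_gt hsinh)).symm


end AuxStmt7

lemma mittagK (x : ℝ) (hx : 0 < x) :
    HasSum (fun n : ℕ => 1/(x^2+π^2*((n:ℝ)+1)^2))
      ((x * Real.cosh x / Real.sinh x - 1)/(2*x^2)) := by
  have hs : Real.sinh x ≠ 0 := ne_of_gt (Real.sinh_pos_iff.mpr hx)
  have h := hasSum_int (2*x) (by linarith)
  rw [show (2*x)/2 = x by ring] at h
  have h1 : HasSum (fun n : ℤ => x/(x^2+π^2*(n:ℝ)^2)) (Real.cosh x / Real.sinh x) := by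
    refine h.congr_fun fun n => ?_
    have hd : (x^2+π^2*(n:ℝ)^2) ≠ 0 := by positivity
    have hd2 : ((2*x)^2+4*π^2*(n:ℝ)^2) ≠ 0 := by positivity
    rw [div_eq_div_iff hd hd2]
    ring
  have h2 := h1.nat_add_neg
  have hg0 : x/(x^2+π^2*((0:ℤ):ℝ)^2) = 1/x := by
    push_cast
    rw [div_eq_div_iff (by positivity) (ne_of_gt hx)]
    ring
  rw [hg0] at h2
  have h3 : HasSum (fun n : ℕ => x/(x^2+π^2*(n:ℝ)^2))
      ((Real.cosh x / Real.sinh x + 1/x)/2) := by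
    refine (h2.div_const 2).congr_fun fun n => ?_
    push_cast
    ring
  have h4 := (hasSum_nat_add_iff' 1).mpr h3
  have h5 := h4.div_const x
  have hvv : ((Real.cosh x / Real.sinh x + 1/x)/2
        - ∑ i ∈ Finset.range 1, x/(x^2+π^2*(i:ℝ)^2))/x
      = (x * Real.cosh x / Real.sinh x - 1)/(2*x^2) := by
    rw [Finset.sum_range_one]
    push_cast
    rw [div_eq_div_iff (ne_of_gt hx) (by positivity)]
    field_simp
    ring
  rw [hvv] at h5
  refine h5.congr_fun fun n => ?_
  have hd : (x^2+π^2*((n:ℝ)+1)^2) ≠ 0 := by positivity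
  rw [div_div]
  rw [div_eq_div_iff hd (by positivity)]
  push_cast
  ring

lemma mittagL (y : ℝ) (hy : 0 < y) :
    HasSum (fun n : ℕ => 1/(y^2+(π*(2*(n:ℝ)+1)/2)^2)) (Real.tanh y/(2*y)) := by
  have hsy : Real.sinh y ≠ 0 := ne_of_gt (Real.sinh_pos_iff.mpr hy)
  have hcy : Real.cosh y ≠ 0 := ne_of_gt (Real.cosh_pos _)
  set F : ℕ → ℝ := fun m => 1/(y^2+(π*(m:ℝ)/2)^2) with hF
  -- full sum
  have hfull : HasSum (fun n : ℕ => F (n+1))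
      ((2*y * Real.cosh (2*y) / Real.sinh (2*y) - 1)/(2*(2*y)^2) * 4) := by
    refine ((mittagK (2*y) (by linarith)).mul_right 4).congr_fun fun n => ?_
    rw [hF]
    have h1 : (y^2+(π*((n:ℝ)+1)/2)^2) ≠ 0 := by positivity
    have h2 : ((2*y)^2+π^2*((n:ℝ)+1)^2) ≠ 0 := by positivity
    push_cast
    rw [div_mul_eq_mul_div, one_mul, div_eq_div_iff h1 h2]
    ring
  -- even sum
  have heven : HasSum (fun n : ℕ => F (2*(n+1)))
      ((y * Real.cosh y / Real.sinh y - 1)/(2*y^2)) := by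
    refine (mittagK y hy).congr_fun fun n => ?_
    rw [hF]
    congr 1
    push_cast
    ring
  have hF0 : F 0 = 1/y^2 := by rw [hF]; norm_num
  set S1 : ℝ := (2*y * Real.cosh (2*y) / Real.sinh (2*y) - 1)/(2*(2*y)^2) * 4 with hS1
  set S2 : ℝ := (y * Real.cosh y / Real.sinh y - 1)/(2*y^2) with hS2
  have hfull0 : HasSum F (S1 + F 0) := by
    refine (hasSum_nat_add_iff' 1).mp ?_
    rw [Finset.sum_range_one]
    convert hfull using 1
    · rfl
    · ring
  have heven0 : HasSum (fun k : ℕ => F (2*k)) (S2 + F 0) := by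
    refine (hasSum_nat_add_iff' (f := fun k : ℕ => F (2*k)) 1).mp ?_
    rw [Finset.sum_range_one]
    have : HasSum (fun n : ℕ => F (2*(n+1))) (S2 + F (2*0) - F (2*0)) := by
      convert heven using 1
      ring
    exact this
  have hsodd : Summable (fun k : ℕ => F (2*k+1)) :=
    hfull0.summable.comp_injective (fun a b hab => by omega)
  have hcomb := HasSum.even_add_odd heven0 hsodd.hasSum
  have huniq := hfull0.unique hcomb
  have hodd : HasSum (fun k : ℕ => F (2*k+1)) (S1 - S2) := by
    have h := hsodd.hasSum
    rw [show (∑' k : ℕ, F (2*k+1)) = S1 - S2 by linarith] at h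
    exact h
  have hv : S1 - S2 = Real.tanh y/(2*y) := by
    rw [hS1, hS2, Real.cosh_two_mul, Real.sinh_two_mul, Real.tanh_eq_sinh_div_cosh]
    have h2y : (2:ℝ)*Real.sinh y*Real.cosh y ≠ 0 := by
      simp [hsy, hcy]
    field_simp
    ring
  rw [hv] at hodd
  refine hodd.congr_fun fun k => ?_
  rw [hF]
  congr 3
  push_cast
  ring


theorem stmt_7 (c : ℝ) (hc : 0 ≤ c) (lam : ℝ) (hlam : 0 < lam) :
    (1 / lam) * (1 - Real.sqrt lam *
        (Real.cosh (Real.sqrt lam) / Real.sinh (Real.sqrt lam) -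
          Real.tanh ((1 + c) * Real.sqrt lam))) =
      (2 / (1 + c)) * ∑' n : ℕ, 1 / (lam + (π * (2 * n + 1) / (2 * (1 + c))) ^ 2)
        - 2 * ∑' n : ℕ, 1 / (lam + π ^ 2 * (n + 1) ^ 2) := by
  set x := Real.sqrt lam with hxdef
  have hx : 0 < x := Real.sqrt_pos.mpr hlam
  have hx2 : x^2 = lam := Real.sq_sqrt hlam.le
  have ha : 0 < 1 + c := by linarith
  have hy : 0 < (1+c)*x := by positivity
  have hs1 : Real.sinh x ≠ 0 := ne_of_gt (Real.sinh_pos_iff.mpr hx)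
  -- second sum
  have e2 : ∑' n : ℕ, 1 / (lam + π ^ 2 * ((n:ℝ) + 1) ^ 2)
      = (x * Real.cosh x / Real.sinh x - 1)/(2*x^2) := by
    rw [← (mittagK x hx).tsum_eq]
    congr 1
    funext n
    rw [hx2]
  -- first sum
  have h1 := (mittagL ((1+c)*x) hy).mul_left ((1+c)^2)
  have e1 : ∑' n : ℕ, 1 / (lam + (π * (2 * (n:ℝ) + 1) / (2 * (1 + c))) ^ 2)
      = (1+c)^2 * (Real.tanh ((1+c)*x)/(2*((1+c)*x))) := by
    rw [← h1.tsum_eq]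
    congr 1
    funext n
    have hd1 : lam + (π * (2 * (n:ℝ) + 1) / (2 * (1 + c))) ^ 2 ≠ 0 := by positivity
    have hd2 : ((1+c)*x)^2 + (π*(2*(n:ℝ)+1)/2)^2 ≠ 0 := by positivity
    rw [mul_one_div, div_eq_div_iff hd1 hd2, ← hx2]
    field_simp
  rw [e1, e2, ← hx2]
  field_simp
  ring
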